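/- Let k be a commutative ring, λ ∈ k, X a set, and A = MonoidAlgebra k (FreeMonoid X). Let Δ_λ : A → A ⊗[k] A be the k-linear map defined on the basis of words by Δ_λ(1) = −λ(1⊗1) and, for m ≥ 1, Δ_λ(x₁⋯x_m) = Σ_{i=1}^{m} (x₁⋯x_i) ⊗ (x_i⋯x_m) + λ Σ_{i=1}^{m−1} (x₁⋯x_i) ⊗ (x_{i+1}⋯x_m). Then Δ_λ satisfies the weight-λ derivation condition on all of A: Δ_λ(a b) = a·Δ_λ(b) + Δ_λ(a)·b + λ (a ⊗ b) for all a, b ∈ A. -/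

import Mathlib

open TensorProduct

/-- The basis element of the monoid algebra of the free monoid corresponding to
the word `x₁ ⋯ x_m` given by the list `l = [x₁, …, x_m]`. -/
noncomputable def word (k : Type*) [CommRing k] {X : Type*} (l : List X) :
    MonoidAlgebra k (FreeMonoid X) :=
  MonoidAlgebra.of k (FreeMonoid X) (FreeMonoid.ofList l)

theorem word_mul {k : Type*} [CommRing k] {X : Type*} (p q : List X) :
    word k p * word k q = word k (p ++ q) := by
  simp only [word, ← map_mul]
  rfl

theorem word_nil {k : Type*} [CommRing k] {X : Type*} :
    word k ([] : List X) = 1 := by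
  simp only [word, FreeMonoid.ofList_nil, map_one]

theorem aux_neg_mul {k : Type*} [CommRing k] {X : Type*}
    (x y : MonoidAlgebra k (FreeMonoid X) ⊗[k] MonoidAlgebra k (FreeMonoid X)) :
    -x * y = -(x * y) := neg_mul x y

theorem aux_mul_neg {k : Type*} [CommRing k] {X : Type*}
    (x y : MonoidAlgebra k (FreeMonoid X) ⊗[k] MonoidAlgebra k (FreeMonoid X)) :
    x * -y = -(x * y) := mul_neg x y

/-- The linear map `Δ_λ` on the monoid algebra of the free monoid on `X`,
defined on the word basis by `Δ_λ(1) = -λ (1 ⊗ 1)` and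
`Δ_λ(x₁⋯x_m) = Σ_{i=1}^m (x₁⋯x_i) ⊗ (x_i⋯x_m) + λ Σ_{i=1}^{m−1} (x₁⋯x_i) ⊗ (x_{i+1}⋯x_m)`,
satisfies the weight-`λ` derivation condition on all of the algebra. -/
theorem weighted_derivation_of_word_coproduct
    {k : Type*} [CommRing k] {X : Type*} (lam : k)
    (Δ : MonoidAlgebra k (FreeMonoid X) →ₗ[k]
      MonoidAlgebra k (FreeMonoid X) ⊗[k] MonoidAlgebra k (FreeMonoid X))
    (hone : Δ 1 = -(lam • ((1 : MonoidAlgebra k (FreeMonoid X))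
      ⊗ₜ[k] (1 : MonoidAlgebra k (FreeMonoid X)))))
    (hword : ∀ l : List X, l ≠ [] →
      Δ (word k l)
        = (∑ i ∈ Finset.range l.length,
            word k (l.take (i + 1)) ⊗ₜ[k] word k (l.drop i))
          + lam • ∑ i ∈ Finset.range (l.length - 1),
            word k (l.take (i + 1)) ⊗ₜ[k] word k (l.drop (i + 1))) :
    ∀ a b : MonoidAlgebra k (FreeMonoid X),
      Δ (a * b) = (a ⊗ₜ[k] (1 : MonoidAlgebra k (FreeMonoid X))) * Δ b
        + Δ a * ((1 : MonoidAlgebra k (FreeMonoid X)) ⊗ₜ[k] b)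
        + lam • (a ⊗ₜ[k] b) := by
  have key : ∀ p q : List X,
      Δ (word k p * word k q)
        = (word k p ⊗ₜ[k] (1 : MonoidAlgebra k (FreeMonoid X))) * Δ (word k q)
          + Δ (word k p) * ((1 : MonoidAlgebra k (FreeMonoid X)) ⊗ₜ[k] word k q)
          + lam • (word k p ⊗ₜ[k] word k q) := by
    intro p q
    rcases eq_or_ne p [] with hp | hp
    · subst hp
      rw [word_nil, one_mul, hone, aux_neg_mul]
      simp only [smul_mul_assoc, Algebra.TensorProduct.tmul_mul_tmul, one_mul, mul_one]
      rw [← Algebra.TensorProduct.one_def, one_mul]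
      abel
    rcases eq_or_ne q [] with hq | hq
    · subst hq
      rw [word_nil, mul_one, hone, aux_mul_neg]
      simp only [mul_smul_comm, Algebra.TensorProduct.tmul_mul_tmul, one_mul, mul_one]
      rw [← Algebra.TensorProduct.one_def, mul_one]
      abel
    -- main case: both words nonempty
    have hp' : p.length ≠ 0 := by simpa using hp
    have hq' : q.length ≠ 0 := by simpa using hq
    obtain ⟨m, hm⟩ : ∃ m, p.length = m + 1 := ⟨p.length - 1, by omega⟩
    obtain ⟨n, hn⟩ : ∃ n, q.length = n + 1 := ⟨q.length - 1, by omega⟩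
    rw [word_mul, hword (p ++ q) (by simp [hp]), hword p hp, hword q hq]
    simp only [List.length_append, hm, hn, Nat.add_sub_cancel]
    -- distribute the multiplications on the right-hand side
    simp only [mul_add, add_mul, Finset.mul_sum, Finset.sum_mul, mul_smul_comm,
      smul_mul_assoc, Algebra.TensorProduct.tmul_mul_tmul, one_mul, mul_one, word_mul]
    -- split the left-hand sums
    rw [show m + 1 + (n + 1) - 1 = m + 1 + n by omega]
    rw [Finset.sum_range_add
      (fun i => word k ((p ++ q).take (i + 1)) ⊗ₜ[k] word k ((p ++ q).drop i)) (m + 1) (n + 1)]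
    rw [Finset.sum_range_add
      (fun i => word k ((p ++ q).take (i + 1)) ⊗ₜ[k] word k ((p ++ q).drop (i + 1))) (m + 1) n]
    rw [Finset.sum_range_succ
      (fun i => word k ((p ++ q).take (i + 1)) ⊗ₜ[k] word k ((p ++ q).drop (i + 1))) m]
    have e1 : (∑ j ∈ Finset.range (n + 1),
        word k ((p ++ q).take (m + 1 + j + 1)) ⊗ₜ[k] word k ((p ++ q).drop (m + 1 + j)))
        = ∑ j ∈ Finset.range (n + 1), word k (p ++ q.take (j + 1)) ⊗ₜ[k] word k (q.drop j) :=
      Finset.sum_congr rfl fun j _ => by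
        rw [show m + 1 + j + 1 = p.length + (j + 1) by omega, List.take_length_add_append,
          show m + 1 + j = p.length + j by omega, List.drop_length_add_append]
    have e2 : (∑ j ∈ Finset.range n,
        word k ((p ++ q).take (m + 1 + j + 1)) ⊗ₜ[k] word k ((p ++ q).drop (m + 1 + j + 1)))
        = ∑ j ∈ Finset.range n, word k (p ++ q.take (j + 1)) ⊗ₜ[k] word k (q.drop (j + 1)) :=
      Finset.sum_congr rfl fun j _ => by
        rw [show m + 1 + j + 1 = p.length + (j + 1) by omega, List.take_length_add_append,
          List.drop_length_add_append]
    have e3 : (∑ i ∈ Finset.range (m + 1),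
        word k ((p ++ q).take (i + 1)) ⊗ₜ[k] word k ((p ++ q).drop i))
        = ∑ i ∈ Finset.range (m + 1), word k (p.take (i + 1)) ⊗ₜ[k] word k (p.drop i ++ q) :=
      Finset.sum_congr rfl fun i hi => by
        have hi' : i < m + 1 := Finset.mem_range.mp hi
        rw [List.take_append_of_le_length (by omega), List.drop_append_of_le_length (by omega)]
    have e4 : (∑ i ∈ Finset.range m,
        word k ((p ++ q).take (i + 1)) ⊗ₜ[k] word k ((p ++ q).drop (i + 1)))
        = ∑ i ∈ Finset.range m,
            word k (p.take (i + 1)) ⊗ₜ[k] word k (p.drop (i + 1) ++ q) :=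
      Finset.sum_congr rfl fun i hi => by
        have hi' : i < m := Finset.mem_range.mp hi
        rw [List.take_append_of_le_length (by omega), List.drop_append_of_le_length (by omega)]
    have e5 : word k ((p ++ q).take (m + 1)) ⊗ₜ[k] word k ((p ++ q).drop (m + 1))
        = word k p ⊗ₜ[k] word k q := by
      rw [show m + 1 = p.length from hm.symm, List.take_left, List.drop_left]
    rw [e1, e2, e3, e4, e5]
    simp only [smul_add]
    abel
  intro a b
  induction a using MonoidAlgebra.induction_on with
  | of g =>
    induction b using MonoidAlgebra.induction_on with
    | of h =>
      have hg : MonoidAlgebra.of k (FreeMonoid X) g = word k (FreeMonoid.toList g) := by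
        rw [word, FreeMonoid.ofList_toList]
      have hh : MonoidAlgebra.of k (FreeMonoid X) h = word k (FreeMonoid.toList h) := by
        rw [word, FreeMonoid.ofList_toList]
      rw [hg, hh]
      exact key _ _
    | add u v hu hv =>
      simp only [mul_add, map_add, tmul_add, add_mul, mul_add, hu, hv, smul_add]
      abel
    | smul r u hu =>
      simp only [mul_smul_comm, map_smul, tmul_smul, hu, smul_add, smul_comm lam r]
  | add u v hu hv =>
    simp only [add_mul, map_add, add_tmul, mul_add, add_mul, hu, hv, smul_add]
    abel
  | smul r u hu =>
    simp only [smul_mul_assoc, map_smul, ← smul_tmul', hu, smul_add, smul_comm lam r]
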